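/- For a vertex k of a quiver with good potential, the chain map β* : P_i → T_k constructed from ∂S/∂β is irreducible: it does not factor as a composition of a nontrivial map P_i → P_r (r ≠ k, given by an arrow γ of Q) followed by a map P_r → T_k, because such a factorization would force all terms of ∂S/∂β to share the length-two subpath γβ, contradicting goodness of S. -/

import Mathlib

/-- A quiver given by a vertex set, an arrow set and source/target maps. -/
structure Quiv where
  V : Type
  E : Type
  s : E → V
  t : E → V

namespace Quiv

/-- A path `a₁ a₂ ⋯ aₙ`, written with the composition-of-functions convention,
is a list of arrows such that the source of each arrow is the target of the next one. -/
def IsPath (q : Quiv) : List q.E → Prop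
  | [] => True
  | [_] => True
  | a :: b :: l => q.s a = q.t b ∧ IsPath q (b :: l)

variable (q : Quiv)

/-- The source of a (nonempty) path. -/
def pSrc (l : List q.E) : Option q.V := l.getLast?.map q.s

/-- The target of a (nonempty) path. -/
def pTgt (l : List q.E) : Option q.V := l.head?.map q.t

/-- A cycle is a nonempty path whose source equals its target. -/
def IsCycle (l : List q.E) : Prop := l ≠ [] ∧ q.IsPath l ∧ q.pSrc l = q.pTgt l

variable (K : Type) [Field K]

open Classical in
/-- The cyclic derivative of a single cycle `a₁ ⋯ aₙ` with respect to an arrow `x`: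
`∑ₖ δ(x, aₖ) • a_{k+1} ⋯ aₙ a₁ ⋯ a_{k-1}`, as an element of the vector space
spanned by paths. -/
noncomputable def cycDerList (x : q.E) (l : List q.E) : List q.E →₀ K :=
  ∑ k ∈ Finset.range l.length,
    if l[k]? = some x then Finsupp.single (l.drop (k + 1) ++ l.take k) 1 else 0

/-- The cyclic derivative of a potential (a linear combination of cycles)
with respect to an arrow `x`, extended linearly. -/
noncomputable def cycDer (x : q.E) (S : List q.E →₀ K) : List q.E →₀ K :=
  S.sum fun l c => c • q.cycDerList K x l

/-- Two potentials are cyclically equivalent if their difference lies in the span of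
the elements `a₁ ⋯ a_{n-1} aₙ - a₂ ⋯ aₙ a₁` for cycles `a₁ ⋯ aₙ`. -/
def CycEquiv (S S' : List q.E →₀ K) : Prop :=
  S - S' ∈ Submodule.span K
    {x : List q.E →₀ K | ∃ l : List q.E, q.IsCycle l ∧
      x = Finsupp.single l 1 - Finsupp.single (l.rotate 1) 1}

end Quiv

namespace Quiv

variable (q : Quiv) (K : Type) [Field K]

/-- The cyclically consecutive pairs of arrows of a cycle `a₁ ⋯ aₙ`:
these record its subpaths of length two. -/
def cycPairs (l : List q.E) : List (q.E × q.E) := l.zip (l.rotate 1)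

open Classical in
/-- A potential `S` is good if it is a linear combination of cycles, each arrow of the quiver
appears at least twice among its terms, and no subpath of length two appears twice. -/
def Good (S : List q.E →₀ K) : Prop :=
  (∀ l ∈ S.support, q.IsCycle l) ∧
  (∀ e : q.E, 2 ≤ ∑ l ∈ S.support, l.count e) ∧
  (∀ p : q.E × q.E, (∑ l ∈ S.support, (q.cycPairs l).count p) ≤ 1)

end Quiv

namespace Quiv

variable (K : Type) [Field K] (q : Quiv) [Fintype q.V]

/-- The defining relations of the path algebra `KQ` as a quotient of the free algebra on
the vertices and arrows of `Q`: the vertices become a complete set of orthogonal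
idempotents, and each arrow `e` satisfies `e = e_{t(e)} · e · e_{s(e)}`. -/
inductive PathRel : FreeAlgebra K (q.V ⊕ q.E) → FreeAlgebra K (q.V ⊕ q.E) → Prop
  | vtxIdem (i : q.V) : PathRel (FreeAlgebra.ι K (Sum.inl i) * FreeAlgebra.ι K (Sum.inl i))
      (FreeAlgebra.ι K (Sum.inl i))
  | vtxOrtho (i j : q.V) : i ≠ j →
      PathRel (FreeAlgebra.ι K (Sum.inl i) * FreeAlgebra.ι K (Sum.inl j)) 0
  | vtxSum : PathRel (∑ i : q.V, FreeAlgebra.ι K (Sum.inl i)) 1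
  | tgtMul (e : q.E) : PathRel
      (FreeAlgebra.ι K (Sum.inl (q.t e)) * FreeAlgebra.ι K (Sum.inr e))
      (FreeAlgebra.ι K (Sum.inr e))
  | srcMul (e : q.E) : PathRel
      (FreeAlgebra.ι K (Sum.inr e) * FreeAlgebra.ι K (Sum.inl (q.s e)))
      (FreeAlgebra.ι K (Sum.inr e))
  | tgtZero (e : q.E) (i : q.V) : i ≠ q.t e → PathRel
      (FreeAlgebra.ι K (Sum.inl i) * FreeAlgebra.ι K (Sum.inr e)) 0
  | srcZero (e : q.E) (i : q.V) : i ≠ q.s e → PathRel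
      (FreeAlgebra.ι K (Sum.inr e) * FreeAlgebra.ι K (Sum.inl i)) 0

/-- The path algebra `KQ` of the quiver `Q` over the field `K`. -/
def PathAlg := RingQuot (PathRel K q)

noncomputable instance : Ring (PathAlg K q) :=
  inferInstanceAs (Ring (RingQuot (PathRel K q)))

noncomputable instance : Algebra K (PathAlg K q) :=
  inferInstanceAs (Algebra K (RingQuot (PathRel K q)))

/-- The idempotent of the path algebra corresponding to a vertex. -/
noncomputable def vtx (i : q.V) : PathAlg K q :=
  RingQuot.mkAlgHom K (PathRel K q) (FreeAlgebra.ι K (Sum.inl i))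

/-- The element of the path algebra corresponding to an arrow. -/
noncomputable def arr (e : q.E) : PathAlg K q :=
  RingQuot.mkAlgHom K (PathRel K q) (FreeAlgebra.ι K (Sum.inr e))

/-- The element of the path algebra corresponding to a path `a₁ ⋯ aₙ`
(product of its arrows). -/
noncomputable def pathEl : List q.E → PathAlg K q
  | [] => 1
  | e :: l => arr K q e * pathEl l

/-- The element of the path algebra corresponding to a linear combination of paths. -/
noncomputable def el (S : List q.E →₀ K) : PathAlg K q :=
  S.sum fun l c => c • pathEl K q l

/-- The relations of the Jacobian algebra: all cyclic derivatives of the potential `S`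
are set to zero. -/
inductive JacobRel (S : List q.E →₀ K) : PathAlg K q → PathAlg K q → Prop
  | deriv (x : q.E) : JacobRel S (el K q (q.cycDer K x S)) 0

/-- The Jacobian algebra `J(Q,S) = KQ / ⟨∂S/∂x : x ∈ Q₁⟩` of a quiver with potential. -/
def Jacob (S : List q.E →₀ K) := RingQuot (JacobRel K q S)

noncomputable instance (S : List q.E →₀ K) : Ring (Jacob K q S) :=
  inferInstanceAs (Ring (RingQuot (JacobRel K q S)))

noncomputable instance (S : List q.E →₀ K) : Algebra K (Jacob K q S) :=
  inferInstanceAs (Algebra K (RingQuot (JacobRel K q S)))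

/-- The projection from the path algebra onto the Jacobian algebra. -/
noncomputable def jmk (S : List q.E →₀ K) : PathAlg K q →ₐ[K] Jacob K q S :=
  RingQuot.mkAlgHom K (JacobRel K q S)

end Quiv

open CategoryTheory CategoryTheory.Limits ZeroObject

/-- The two-term cochain complex `0 → X → Y → 0` with `X` in degree `0` and `Y` in
degree `1`, and differential `f`. -/
noncomputable def twoTerm {C : Type _} [Category C] [HasZeroMorphisms C] [HasZeroObject C]
    (X Y : C) (f : X ⟶ Y) : CochainComplex C ℤ where
  X n := if n = 0 then X else if n = 1 then Y else 0
  d i j :=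
    if h : i = 0 ∧ j = 1 then
      eqToHom (by rw [h.1]; simp) ≫ f ≫ eqToHom (by rw [h.2]; simp)
    else 0
  shape i j hij := by
    try dsimp only
    rw [dif_neg]
    rintro ⟨rfl, rfl⟩
    exact hij (by simp [ComplexShape.up])
  d_comp_d' i j k hij hjk := by
    try dsimp only
    by_cases h : i = 0 ∧ j = 1
    · obtain ⟨h0, h1⟩ := h
      subst h0; subst h1
      rw [dif_pos ⟨rfl, rfl⟩, dif_neg (fun hc => one_ne_zero hc.1), comp_zero]
    · rw [dif_neg h, zero_comp]

namespace Quiv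

variable (K : Type) [Field K] (q : _root_.Quiv) [Fintype q.V] [Fintype q.E]
  [DecidableEq q.V] [DecidableEq q.E] (S : List q.E →₀ K)

/-- The image of a vertex idempotent in the Jacobian algebra. -/
noncomputable def vtxJ (i : q.V) : Jacob K q S := jmk K q S (vtx K q i)

/-- The image of an arrow in the Jacobian algebra. -/
noncomputable def arrJ (e : q.E) : Jacob K q S := jmk K q S (arr K q e)

/-- The image of a path in the Jacobian algebra. -/
noncomputable def pathJ (l : List q.E) : Jacob K q S := jmk K q S (pathEl K q l)

/-- The indecomposable projective right module `Pᵢ = eᵢ R` over the Jacobian algebra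
`R = J(Q,S)`, realized as the `Rᵐᵒᵖ`-submodule of `R` spanned by the idempotent `eᵢ`
(right modules are modules over the opposite algebra). -/
noncomputable def P (i : q.V) : Submodule (Jacob K q S)ᵐᵒᵖ (Jacob K q S) :=
  Submodule.span (Jacob K q S)ᵐᵒᵖ {vtxJ K q S i}

/-- Left multiplication by an element of the Jacobian algebra, as an endomorphism of
the regular right module. -/
noncomputable def leftMul (x : Jacob K q S) :
    Jacob K q S →ₗ[(Jacob K q S)ᵐᵒᵖ] Jacob K q S where
  toFun y := x * y
  map_add' a b := mul_add x a b
  map_smul' r y := by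
    simp only [MulOpposite.smul_eq_mul_unop, RingHom.id_apply, mul_assoc]

/-- The set of arrows into a given vertex `k`. -/
def In (k : q.V) : Type := {e : q.E // q.t e = k}

instance (k : q.V) : Fintype (q.In k) :=
  inferInstanceAs (Fintype {e : q.E // q.t e = k})

instance (k : q.V) : DecidableEq (q.In k) :=
  inferInstanceAs (DecidableEq {e : q.E // q.t e = k})

lemma vtxJ_mul_arrJ (e : q.E) :
    vtxJ K q S (q.t e) * arrJ K q S e = arrJ K q S e := by
  have h : RingQuot.mkAlgHom K (PathRel K q)
        (FreeAlgebra.ι K (Sum.inl (q.t e)) * FreeAlgebra.ι K (Sum.inr e))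
      = RingQuot.mkAlgHom K (PathRel K q) (FreeAlgebra.ι K (Sum.inr e)) :=
    RingQuot.mkAlgHom_rel K (PathRel.tgtMul e)
  rw [map_mul] at h
  rw [vtxJ, arrJ, ← map_mul]
  exact congrArg (jmk K q S) h

lemma arrJ_mul_vtxJ (e : q.E) :
    arrJ K q S e * vtxJ K q S (q.s e) = arrJ K q S e := by
  have h : RingQuot.mkAlgHom K (PathRel K q)
        (FreeAlgebra.ι K (Sum.inr e) * FreeAlgebra.ι K (Sum.inl (q.s e)))
      = RingQuot.mkAlgHom K (PathRel K q) (FreeAlgebra.ι K (Sum.inr e)) :=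
    RingQuot.mkAlgHom_rel K (PathRel.srcMul e)
  rw [map_mul] at h
  rw [arrJ, vtxJ, ← map_mul]
  exact congrArg (jmk K q S) h

lemma arrJ_mem (e : q.E) (y : Jacob K q S) (hy : y ∈ P K q S (q.s e)) :
    arrJ K q S e * y ∈ P K q S (q.t e) := by
  rcases Submodule.mem_span_singleton.1 hy with ⟨c, rfl⟩
  refine Submodule.mem_span_singleton.2 ⟨MulOpposite.op (arrJ K q S e * c.unop), ?_⟩
  simp only [MulOpposite.smul_eq_mul_unop, MulOpposite.unop_op]
  rw [← mul_assoc, vtxJ_mul_arrJ, ← mul_assoc, arrJ_mul_vtxJ]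

/-- Left multiplication by an arrow `e : j → k`, as a map of right modules
`P_j → P_k` (the component of the presentation map of `T_k`). -/
noncomputable def arrMul (k : q.V) (e : q.In k) :
    ↥(P K q S (q.s e.1)) →ₗ[(Jacob K q S)ᵐᵒᵖ] ↥(P K q S k) :=
  (leftMul K q S (arrJ K q S e.1)).restrict (p := P K q S (q.s e.1)) (q := P K q S k)
    (fun y hy => by
      have := arrJ_mem K q S e.1 y hy
      rwa [e.2] at this)

/-- The direct sum `⊕_{j → k} P_j` over all arrows into `k`. -/
noncomputable abbrev DS (k : q.V) :=
  DirectSum (q.In k) fun e => ↥(P K q S (q.s e.1))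

/-- The presentation map `(αⱼ)ⱼ : ⊕_{j → k} P_j → P_k` whose components are left
multiplication by the arrows into `k`. -/
noncomputable def pres (k : q.V) :
    DS K q S k →ₗ[(Jacob K q S)ᵐᵒᵖ] ↥(P K q S k) :=
  DirectSum.toModule _ _ _ fun e => arrMul K q S k e

/-- The two-term complex `T_k = (⊕_{j → k} P_j → P_k)` of right modules over the
Jacobian algebra (with `⊕_{j → k} P_j` in degree `0` and `P_k` in degree `1`). -/
noncomputable def Tk (k : q.V) : CochainComplex (ModuleCat (Jacob K q S)ᵐᵒᵖ) ℤ :=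
  twoTerm (ModuleCat.of (Jacob K q S)ᵐᵒᵖ (DS K q S k))
    (ModuleCat.of (Jacob K q S)ᵐᵒᵖ (↥(P K q S k)))
    (ModuleCat.ofHom (pres K q S k))

/-- The stalk complex of a right module placed in degree `0`. -/
noncomputable def stalk (M : Type) [AddCommGroup M] [Module (Jacob K q S)ᵐᵒᵖ M] :
    CochainComplex (ModuleCat (Jacob K q S)ᵐᵒᵖ) ℤ :=
  (HomologicalComplex.single (ModuleCat (Jacob K q S)ᵐᵒᵖ) (ComplexShape.up ℤ) 0).obj
    (ModuleCat.of (Jacob K q S)ᵐᵒᵖ M)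

/-- The canonical functor from complexes to the homotopy category. -/
noncomputable def ho (X : CochainComplex (ModuleCat (Jacob K q S)ᵐᵒᵖ) ℤ) :
    HomotopyCategory (ModuleCat (Jacob K q S)ᵐᵒᵖ) (ComplexShape.up ℤ) :=
  (HomotopyCategory.quotient _ _).obj X

end Quiv

/- ### Auxiliary development for `dual_arrow_is_irreducible` -/

section DualArrowAux

namespace DA

lemma getElem_congr {α : Type} (l : List α) {a b : ℕ} (h : a = b) (ha : a < l.length) :
    l[a]'ha = l[b]'(h ▸ ha) := by subst h; rfl

lemma two_le_count {α : Type} [BEq α] [LawfulBEq α] {m : List α} {a : α} {i j : ℕ}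
    (hi : i < m.length) (hj : j < m.length) (hij : i < j)
    (ha : m[i]'hi = a) (hb : m[j]'hj = a) : 2 ≤ m.count a := by
  have h1 : a ∈ m.take j := by
    have hlt : i < (m.take j).length := by
      rw [List.length_take]; omega
    have : (m.take j)[i]'hlt = a := by rw [List.getElem_take]; exact ha
    exact this ▸ List.getElem_mem hlt
  have h2 : a ∈ m.drop j := by
    have hlt : 0 < (m.drop j).length := by rw [List.length_drop]; omega
    have : (m.drop j)[0]'hlt = a := by rw [List.getElem_drop]; simpa using hb
    exact this ▸ List.getElem_mem hlt
  have hc := List.count_append (a := a) (l₁ := m.take j) (l₂ := m.drop j)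
  rw [List.take_append_drop] at hc
  have c1 : 0 < (m.take j).count a := List.count_pos_iff.mpr h1
  have c2 : 0 < (m.drop j).count a := List.count_pos_iff.mpr h2
  omega

lemma mod_succ_eq {n x : ℕ} (hn : 1 < n) : (x % n + 1) % n = (x + 1) % n := by
  conv_rhs => rw [Nat.add_mod]
  rw [Nat.mod_eq_of_lt hn]

lemma isPath_iff (q : _root_.Quiv) : ∀ (l : List q.E),
    q.IsPath l ↔ ∀ (j : ℕ) (h : j + 1 < l.length), q.s (l[j]'(by omega)) = q.t (l[j+1]'h)
  | [] => by
      constructor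
      · intro _ j hj; simp at hj
      · intro _; exact trivial
  | [a] => by
      constructor
      · intro _ j hj; simp at hj
      · intro _; exact trivial
  | a :: b :: l => by
      have ih := isPath_iff q (b :: l)
      constructor
      · intro hp j hj
        have h1 : q.s a = q.t b := hp.1
        have h2 : q.IsPath (b :: l) := hp.2
        match j with
        | 0 => simpa using h1
        | (j+1) =>
          have := (ih.mp h2) j (by simpa using hj)
          simpa using this
      · intro hh
        refine ⟨by simpa using hh 0 (by simp), ih.mpr ?_⟩
        intro j hj
        have := hh (j+1) (by simpa using hj)
        simpa using this

lemma isPath_tail {q : _root_.Quiv} {a : q.E} {l : List q.E} (h : q.IsPath (a :: l)) :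
    q.IsPath l := by
  cases l with
  | nil => exact trivial
  | cons b l => exact h.2

lemma cyc_step' {q : _root_.Quiv} {l : List q.E} (hc : q.IsCycle l) {a b : ℕ}
    (ha : a < l.length) (hb : b < l.length) (hab : (a+1) % l.length = b) :
    q.s (l[a]'ha) = q.t (l[b]'hb) := by
  obtain ⟨hne, hp, hst⟩ := hc
  rcases Nat.lt_or_ge (a+1) l.length with h | h
  · have hb' : b = a + 1 := by rw [← hab, Nat.mod_eq_of_lt h]
    subst hb'
    exact (isPath_iff q l).mp hp a h
  · have hA : a + 1 = l.length := by omega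
    have hb0 : b = 0 := by rw [← hab, hA, Nat.mod_self]
    subst hb0
    have h1 : q.pSrc l = some (q.s (l[a]'ha)) := by
      rw [Quiv.pSrc, List.getLast?_eq_getElem?]
      have hidx : l.length - 1 = a := by omega
      rw [hidx, List.getElem?_eq_getElem ha]
      rfl
    have h2 : q.pTgt l = some (q.t (l[0]'(by omega))) := by
      rw [Quiv.pTgt, List.head?_eq_getElem?, List.getElem?_eq_getElem (by omega : 0 < l.length)]
      rfl
    rw [h1, h2] at hst
    exact Option.some_injective _ hst

lemma cyc_len {q : _root_.Quiv} (hNoLoops : ∀ e : q.E, q.s e ≠ q.t e)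
    (hNoTwo : ∀ e f : q.E, ¬(q.s e = q.t f ∧ q.s f = q.t e))
    {l : List q.E} (hc : q.IsCycle l) : 3 ≤ l.length := by
  obtain ⟨hne, hp, hst⟩ := hc
  match l, hne with
  | [], hne => exact absurd rfl hne
  | [a], _ => 
    rw [Quiv.pSrc, Quiv.pTgt] at hst
    simp at hst
    exact absurd hst (hNoLoops a)
  | [a, b], _ =>
    rw [Quiv.pSrc, Quiv.pTgt] at hst
    simp at hst
    have h1 : q.s a = q.t b := hp.1
    exact absurd ⟨h1, hst⟩ (hNoTwo a b)
  | (a :: b :: c :: l), _ => simp only [List.length_cons]; omega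

lemma derTerm_eq {α : Type} {l : List α} {k : ℕ} (hk : k < l.length) :
    l.drop (k+1) ++ l.take k = (l.rotate (k+1)).dropLast := by
  rcases Nat.lt_or_ge (k+1) l.length with h | h
  · rw [List.rotate_eq_drop_append_take h.le, List.take_succ, List.getElem?_eq_getElem hk,
      Option.toList_some, ← List.append_assoc, List.dropLast_concat]
  · have hA : k + 1 = l.length := by omega
    have hk' : k = l.length - 1 := by omega
    rw [hA, List.rotate_length, List.drop_length, List.dropLast_eq_take, List.nil_append, hk']

lemma derTerm_length {α : Type} {l : List α} {k : ℕ} (hk : k < l.length) :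
    (l.drop (k+1) ++ l.take k).length = l.length - 1 := by
  rw [List.length_append, List.length_drop, List.length_take]
  omega

lemma derTerm_getElem {α : Type} {l : List α} {k : ℕ} (hk : k < l.length) {j : ℕ}
    (hj : j < l.length - 1) :
    (l.drop (k+1) ++ l.take k)[j]'(by rw [derTerm_length hk]; exact hj)
      = l[(j + (k+1)) % l.length]'(Nat.mod_lt _ (by omega)) := by
  rw [List.getElem_of_eq (derTerm_eq hk), List.getElem_dropLast, List.getElem_rotate]

lemma length_cycPairs {q : _root_.Quiv} (l : List q.E) : (q.cycPairs l).length = l.length := by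
  rw [Quiv.cycPairs, List.length_zip, List.length_rotate, Nat.min_self]

lemma cycPairs_getElem {q : _root_.Quiv} (l : List q.E) {a : ℕ} (ha : a < l.length) :
    (q.cycPairs l)[a]'(by rw [length_cycPairs]; exact ha)
      = (l[a]'ha, l[(a+1) % l.length]'(Nat.mod_lt _ (by omega))) := by
  have hcp : q.cycPairs l = l.zip (l.rotate 1) := rfl
  rw [List.getElem_of_eq hcp, List.getElem_zip, List.getElem_rotate]

lemma pair_mem_cycPairs {q : _root_.Quiv} (l : List q.E) {a b : ℕ} (ha : a < l.length)
    (hb : b < l.length) (hab : (a+1) % l.length = b) :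
    (l[a]'ha, l[b]'hb) ∈ q.cycPairs l := by
  subst hab
  rw [← cycPairs_getElem l ha]
  exact List.getElem_mem _

lemma derTerm_pair_mem {q : _root_.Quiv} {l : List q.E} {k : ℕ} (hk : k < l.length) {j : ℕ}
    (hj : j + 1 < l.length - 1) :
    ((l.drop (k+1) ++ l.take k)[j]'(by rw [derTerm_length hk]; omega),
     (l.drop (k+1) ++ l.take k)[j+1]'(by rw [derTerm_length hk]; omega)) ∈ q.cycPairs l := by
  rw [derTerm_getElem hk (by omega), derTerm_getElem hk hj]
  refine pair_mem_cycPairs l _ _ ?_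
  rw [mod_succ_eq (by omega)]
  congr 1
  omega

lemma good_pair_eq {q : _root_.Quiv} {K : Type} [Field K] {S : List q.E →₀ K} (hG : q.Good K S)
    {l l' : List q.E} (hl : l ∈ S.support) (hl' : l' ∈ S.support) {P : q.E × q.E}
    (h1 : P ∈ q.cycPairs l) (h2 : P ∈ q.cycPairs l') : l = l' := by
  classical
  by_contra hne
  refine absurd (hG.2.2 P) (not_le.mpr ?_)
  have hsub : ({l, l'} : Finset (List q.E)) ⊆ S.support := by
    intro z hz
    rcases Finset.mem_insert.mp hz with rfl | hz
    · exact hl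
    · rw [Finset.mem_singleton] at hz
      exact hz ▸ hl'
  refine lt_of_lt_of_le ?_ (Finset.sum_le_sum_of_subset hsub)
  rw [Finset.sum_pair hne]
  exact lt_of_lt_of_le one_lt_two
    (Nat.add_le_add (List.count_pos_iff.mpr h1) (List.count_pos_iff.mpr h2))

lemma good_pair_unique {q : _root_.Quiv} {K : Type} [Field K] {S : List q.E →₀ K} (hG : q.Good K S)
    {l : List q.E} (hl : l ∈ S.support) {a b : ℕ}
    (ha : a < l.length) (hb : b < l.length) (hab : a ≠ b) {P : q.E × q.E}
    (hPa : (q.cycPairs l)[a]'(by rw [length_cycPairs]; exact ha) = P)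
    (hPb : (q.cycPairs l)[b]'(by rw [length_cycPairs]; exact hb) = P) : False := by
  classical
  refine absurd (hG.2.2 P) (not_le.mpr ?_)
  refine lt_of_lt_of_le ?_ (Finset.single_le_sum (fun _ _ => Nat.zero_le _) hl)
  rcases Nat.lt_or_ge a b with h | h
  · exact two_le_count (by rw [length_cycPairs]; exact ha)
      (by rw [length_cycPairs]; exact hb) h hPa hPb
  · have h' : b < a := by omega
    exact two_le_count (by rw [length_cycPairs]; exact hb)
      (by rw [length_cycPairs]; exact ha) h' hPb hPa

lemma good_occ_unique {q : _root_.Quiv} {K : Type} [Field K] {S : List q.E →₀ K} (hG : q.Good K S)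
    {l l' : List q.E} (hl : l ∈ S.support) (hl' : l' ∈ S.support) {a b : ℕ}
    (ha : a < l.length) (hb : b < l'.length) {P : q.E × q.E}
    (hPa : (q.cycPairs l)[a]'(by rw [length_cycPairs]; exact ha) = P)
    (hPb : (q.cycPairs l')[b]'(by rw [length_cycPairs]; exact hb) = P) :
    l = l' ∧ a = b := by
  have hP1 : P ∈ q.cycPairs l := hPa ▸ List.getElem_mem _
  have hP2 : P ∈ q.cycPairs l' := hPb ▸ List.getElem_mem _
  have hll : l = l' := good_pair_eq hG hl hl' hP1 hP2
  subst hll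
  refine ⟨rfl, ?_⟩
  by_contra hab
  exact good_pair_unique hG hl ha hb hab hPa hPb

lemma mem_support_cycDer {K : Type} [Field K] {q : _root_.Quiv} {S : List q.E →₀ K} {x : q.E}
    {p : List q.E} (hp : p ∈ (q.cycDer K x S).support) :
    ∃ l, l ∈ S.support ∧ ∃ kk, ∃ (hkk : kk < l.length), l[kk]'hkk = x ∧
      p = l.drop (kk+1) ++ l.take kk := by
  classical
  rw [Quiv.cycDer] at hp
  obtain ⟨l, hl, hpl⟩ := Finset.mem_biUnion.mp (Finsupp.support_sum hp)
  have hpl' := Finsupp.support_smul hpl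
  rw [Quiv.cycDerList] at hpl'
  obtain ⟨kk, hkk, hpk⟩ := Finset.mem_biUnion.mp (Finsupp.support_finset_sum hpl')
  rw [Finset.mem_range] at hkk
  refine ⟨l, hl, kk, hkk, ?_⟩
  split at hpk
  case isTrue hx =>
    rw [List.getElem?_eq_getElem hkk] at hx
    have hpp := Finsupp.support_single_subset hpk
    rw [Finset.mem_singleton] at hpp
    exact ⟨Option.some_injective _ hx, hpp⟩
  case isFalse => simp at hpk

end DA

namespace DA

variable (K : Type) [Field K] (q : _root_.Quiv)

/-- The target vertex of a based path. -/
def tgtB : q.V × List q.E → q.V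
  | (j, []) => j
  | (_, e :: _) => q.t e

/-- The vector space with basis the based paths. -/
abbrev V0 : Type := (q.V × List q.E) →₀ K

variable [Fintype q.V] [Fintype q.E] [DecidableEq q.V] [DecidableEq q.E]

noncomputable def Evtx (i : q.V) : V0 K q →ₗ[K] V0 K q :=
  Finsupp.lsum K fun b => if tgtB q b = i then Finsupp.lsingle b else 0

noncomputable def Earr (a : q.E) : V0 K q →ₗ[K] V0 K q :=
  Finsupp.lsum K fun b => if q.s a = tgtB q b then Finsupp.lsingle (b.1, a :: b.2) else 0

lemma Evtx_single (i : q.V) (b : q.V × List q.E) (c : K) :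
    Evtx K q i (Finsupp.single b c) = if tgtB q b = i then Finsupp.single b c else 0 := by
  rw [Evtx, Finsupp.lsum_single]
  split
  · rw [Finsupp.lsingle_apply]
  · rw [LinearMap.zero_apply]

lemma Earr_single (a : q.E) (b : q.V × List q.E) (c : K) :
    Earr K q a (Finsupp.single b c)
      = if q.s a = tgtB q b then Finsupp.single (b.1, a :: b.2) c else 0 := by
  rw [Earr, Finsupp.lsum_single]
  split
  · rw [Finsupp.lsingle_apply]
  · rw [LinearMap.zero_apply]

noncomputable def rho : FreeAlgebra K (q.V ⊕ q.E) →ₐ[K] Module.End K (V0 K q) :=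
  FreeAlgebra.lift K (Sum.elim (fun i => Evtx K q i) (fun e => Earr K q e))

lemma rho_inl (i : q.V) : rho K q (FreeAlgebra.ι K (Sum.inl i)) = Evtx K q i := by
  rw [rho, FreeAlgebra.lift_ι_apply]; rfl

lemma rho_inr (e : q.E) : rho K q (FreeAlgebra.ι K (Sum.inr e)) = Earr K q e := by
  rw [rho, FreeAlgebra.lift_ι_apply]; rfl

lemma endext {f g : Module.End K (V0 K q)}
    (h : ∀ (b : q.V × List q.E) (c : K),
      f (Finsupp.single b c) = g (Finsupp.single b c)) : f = g :=
  Finsupp.lhom_ext h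

lemma rho_rel {a b : FreeAlgebra K (q.V ⊕ q.E)} (h : Quiv.PathRel K q a b) :
    rho K q a = rho K q b := by
  cases h with
  | vtxIdem i =>
    rw [map_mul, rho_inl]
    refine endext K q fun b c => ?_
    rw [Module.End.mul_apply, Evtx_single]
    split
    case isTrue h => rw [Evtx_single, if_pos h]
    case isFalse h => rw [map_zero]
  | vtxOrtho i j hij =>
    rw [map_mul, rho_inl, rho_inl, map_zero]
    refine endext K q fun b c => ?_
    rw [Module.End.mul_apply, Evtx_single, LinearMap.zero_apply]
    split
    case isTrue h =>
      rw [Evtx_single, if_neg (fun hh => hij (hh.symm.trans h))]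
    case isFalse h => rw [map_zero]
  | vtxSum =>
    rw [map_sum, map_one]
    refine endext K q fun b c => ?_
    simp only [LinearMap.sum_apply, rho_inl, Evtx_single, Module.End.one_apply]
    rw [Finset.sum_ite_eq, if_pos (Finset.mem_univ _)]
  | tgtMul e =>
    rw [map_mul, rho_inl, rho_inr]
    refine endext K q fun b c => ?_
    rw [Module.End.mul_apply, Earr_single]
    split
    case isTrue h =>
      have hcnd : tgtB q (b.1, e :: b.2) = q.t e := rfl
      rw [Evtx_single, if_pos hcnd]
    case isFalse h => rw [map_zero]
  | srcMul e =>
    rw [map_mul, rho_inr, rho_inl]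
    refine endext K q fun b c => ?_
    rw [Module.End.mul_apply, Evtx_single]
    split
    case isTrue h => rfl
    case isFalse h => rw [map_zero, Earr_single, if_neg (fun hh => h hh.symm)]
  | tgtZero e i hi =>
    rw [map_mul, rho_inl, rho_inr, map_zero]
    refine endext K q fun b c => ?_
    rw [Module.End.mul_apply, Earr_single, LinearMap.zero_apply]
    split
    case isTrue h =>
      have ht : tgtB q (b.1, e :: b.2) = q.t e := rfl
      rw [Evtx_single, ht, if_neg (fun hh => hi hh.symm)]
    case isFalse h => rw [map_zero]
  | srcZero e i hi =>
    rw [map_mul, rho_inr, rho_inl, map_zero]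
    refine endext K q fun b c => ?_
    rw [Module.End.mul_apply, Evtx_single, LinearMap.zero_apply]
    split
    case isTrue h =>
      rw [Earr_single, if_neg (fun hh => hi (hh.trans h).symm)]
    case isFalse h => rw [map_zero]

noncomputable def Psi : Quiv.PathAlg K q →ₐ[K] Module.End K (V0 K q) :=
  RingQuot.liftAlgHom K ⟨rho K q, fun _ _ h => rho_rel K q h⟩

lemma Psi_mk (x : FreeAlgebra K (q.V ⊕ q.E)) :
    Psi K q (RingQuot.mkAlgHom K (Quiv.PathRel K q) x) = rho K q x :=
  RingQuot.liftAlgHom_mkAlgHom_apply K _ _ x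

lemma Psi_arr (e : q.E) : Psi K q (Quiv.arr K q e) = Earr K q e := by
  rw [Quiv.arr, Psi_mk, rho_inr]

lemma Psi_pathEl_or (p : List q.E) (b : q.V × List q.E) (c : K) :
    Psi K q (Quiv.pathEl K q p) (Finsupp.single b c) = Finsupp.single (b.1, p ++ b.2) c ∨
    Psi K q (Quiv.pathEl K q p) (Finsupp.single b c) = 0 := by
  induction p with
  | nil =>
    left
    rw [show Quiv.pathEl K q ([] : List q.E) = 1 from rfl, map_one, Module.End.one_apply]
    simp
  | cons e p ih =>
    rw [show Quiv.pathEl K q (e :: p) = Quiv.arr K q e * Quiv.pathEl K q p from rfl, map_mul,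
      Module.End.mul_apply, Psi_arr]
    rcases ih with h | h
    · rw [h, Earr_single]
      split
      · left; rfl
      · right; rfl
    · rw [h, map_zero]
      right; rfl

lemma Psi_pathEl_pos (p : List q.E) (hp : q.IsPath p) (j : q.V)
    (hlast : ∀ h : p ≠ [], q.s (p.getLast h) = j) :
    Psi K q (Quiv.pathEl K q p) (Finsupp.single (j, ([] : List q.E)) (1 : K))
      = Finsupp.single (j, p) 1 := by
  induction p with
  | nil =>
    rw [show Quiv.pathEl K q ([] : List q.E) = 1 from rfl, map_one, Module.End.one_apply]
  | cons e p ih =>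
    have hl : ∀ h : p ≠ [], q.s (p.getLast h) = j := by
      intro hne
      have h2 := hlast (List.cons_ne_nil e p)
      rwa [List.getLast_cons hne] at h2
    have hc : q.s e = tgtB q (j, p) := by
      cases p with
      | nil => simpa [tgtB] using hlast (List.cons_ne_nil e [])
      | cons f p' => exact hp.1
    rw [show Quiv.pathEl K q (e :: p) = Quiv.arr K q e * Quiv.pathEl K q p from rfl, map_mul,
      Module.End.mul_apply, Psi_arr, ih (isPath_tail hp) hl, Earr_single, if_pos hc]

variable (S : List q.E →₀ K) (γ : q.E)

/-- "Bad" path lists: those containing a term of a cyclic derivative of `S` as a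
contiguous sublist, or ending with the arrow `γ`. -/
def BadL : List q.E → Prop := fun L =>
  (∃ m, L = m ++ [γ]) ∨
  ∃ x : q.E, ∃ p ∈ (q.cycDer K x S).support, ∃ m w, L = m ++ (p ++ w)

noncomputable def Zsub : Submodule K (V0 K q) :=
  Finsupp.supported K K {b : q.V × List q.E | BadL K q S γ b.2}

lemma badL_cons (a : q.E) {L : List q.E} (h : BadL K q S γ L) : BadL K q S γ (a :: L) := by
  rcases h with ⟨m, rfl⟩ | ⟨x, p, hp, m, w, rfl⟩
  · exact Or.inl ⟨a :: m, rfl⟩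
  · exact Or.inr ⟨x, p, hp, a :: m, w, rfl⟩

lemma single_mem_Zsub {b : q.V × List q.E} (hb : BadL K q S γ b.2) (c : K) :
    Finsupp.single b c ∈ Zsub K q S γ :=
  Finsupp.single_mem_supported K c hb

lemma Evtx_mem_Zsub (i : q.V) {z : V0 K q} (hz : z ∈ Zsub K q S γ) :
    Evtx K q i z ∈ Zsub K q S γ := by
  have hle : Finsupp.supported K K {b : q.V × List q.E | BadL K q S γ b.2}
      ≤ (Zsub K q S γ).comap (Evtx K q i) := by
    rw [Finsupp.supported_eq_span_single, Submodule.span_le]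
    rintro _ ⟨b, hb, rfl⟩
    simp only [SetLike.mem_coe, Submodule.mem_comap]
    rw [Evtx_single]
    split
    · exact single_mem_Zsub K q S γ hb 1
    · exact zero_mem _
  exact hle hz

lemma Earr_mem_Zsub (e : q.E) {z : V0 K q} (hz : z ∈ Zsub K q S γ) :
    Earr K q e z ∈ Zsub K q S γ := by
  have hle : Finsupp.supported K K {b : q.V × List q.E | BadL K q S γ b.2}
      ≤ (Zsub K q S γ).comap (Earr K q e) := by
    rw [Finsupp.supported_eq_span_single, Submodule.span_le]
    rintro _ ⟨b, hb, rfl⟩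
    simp only [SetLike.mem_coe, Submodule.mem_comap]
    rw [Earr_single]
    split
    · exact single_mem_Zsub K q S γ (badL_cons K q S γ e hb) 1
    · exact zero_mem _
  exact hle hz

lemma rho_mem_Zsub (x : FreeAlgebra K (q.V ⊕ q.E)) :
    ∀ z ∈ Zsub K q S γ, rho K q x z ∈ Zsub K q S γ := by
  refine FreeAlgebra.induction K _ (fun r z hz => ?_) (fun y z hz => ?_)
    (fun a b ha hb z hz => ?_) (fun a b ha hb z hz => ?_) x
  · rw [AlgHom.commutes, Module.algebraMap_end_apply]
    exact Submodule.smul_mem _ _ hz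
  · cases y with
    | inl i => rw [rho_inl]; exact Evtx_mem_Zsub K q S γ i hz
    | inr e => rw [rho_inr]; exact Earr_mem_Zsub K q S γ e hz
  · rw [map_mul, Module.End.mul_apply]
    exact ha _ (hb z hz)
  · rw [map_add, LinearMap.add_apply]
    exact add_mem (ha z hz) (hb z hz)

lemma Psi_mem_Zsub (g : Quiv.PathAlg K q) {z : V0 K q} (hz : z ∈ Zsub K q S γ) :
    Psi K q g z ∈ Zsub K q S γ := by
  obtain ⟨x, rfl⟩ := RingQuot.mkAlgHom_surjective K (Quiv.PathRel K q) g
  rw [Psi_mk]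
  exact rho_mem_Zsub K q S γ x z hz

lemma Psi_el_cycDer_mem (x : q.E) (w : V0 K q) :
    Psi K q (Quiv.el K q (q.cycDer K x S)) w ∈ Zsub K q S γ := by
  induction w using Finsupp.induction_linear with
  | zero => rw [map_zero]; exact zero_mem _
  | add f g hf hg => rw [map_add]; exact add_mem hf hg
  | single b c =>
    rw [Quiv.el, map_finsuppSum, Finsupp.sum, LinearMap.sum_apply]
    refine Submodule.sum_mem _ fun p hp => ?_
    rw [map_smul, LinearMap.smul_apply]
    refine Submodule.smul_mem _ _ ?_
    rcases Psi_pathEl_or K q p b c with h | h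
    · rw [h]
      exact single_mem_Zsub K q S γ (Or.inr ⟨x, p, hp, [], b.2, rfl⟩) c
    · rw [h]; exact zero_mem _

noncomputable def PsiQ :
    Quiv.PathAlg K q →ₐ[K] Module.End K (V0 K q ⧸ Zsub K q S γ) where
  toFun g := (Zsub K q S γ).mapQ (Zsub K q S γ) (Psi K q g)
    (fun _ hz => Psi_mem_Zsub K q S γ g hz)
  map_one' := by
    refine Submodule.linearMap_qext _ ?_
    refine LinearMap.ext fun v => ?_
    simp [Submodule.mapQ_apply]
  map_mul' a b := by
    refine Submodule.linearMap_qext _ ?_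
    refine LinearMap.ext fun v => ?_
    simp [Submodule.mapQ_apply, Module.End.mul_apply]
  map_zero' := by
    refine Submodule.linearMap_qext _ ?_
    refine LinearMap.ext fun v => ?_
    simp [Submodule.mapQ_apply]
  map_add' a b := by
    refine Submodule.linearMap_qext _ ?_
    refine LinearMap.ext fun v => ?_
    simp [Submodule.mapQ_apply, LinearMap.add_apply]
  commutes' r := by
    refine Submodule.linearMap_qext _ ?_
    refine LinearMap.ext fun v => ?_
    simp [Submodule.mapQ_apply, Module.algebraMap_end_apply, Submodule.Quotient.mk_smul]

lemma PsiQ_mk (g : Quiv.PathAlg K q) (v : V0 K q) :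
    PsiQ K q S γ g (Submodule.Quotient.mk v)
      = Submodule.Quotient.mk (Psi K q g v) := by
  show (Zsub K q S γ).mapQ (Zsub K q S γ) (Psi K q g)
    (fun _ hz => Psi_mem_Zsub K q S γ g hz) (Submodule.Quotient.mk v) = _
  rw [Submodule.mapQ_apply]

noncomputable def Theta :
    Quiv.Jacob K q S →ₐ[K] Module.End K (V0 K q ⧸ Zsub K q S γ) :=
  RingQuot.liftAlgHom K ⟨PsiQ K q S γ, by
    intro a b h
    cases h with
    | deriv x =>
      rw [map_zero]
      refine Submodule.linearMap_qext _ ?_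
      refine LinearMap.ext fun v => ?_
      simp only [LinearMap.comp_apply, Submodule.mkQ_apply, LinearMap.zero_comp,
        LinearMap.zero_apply]
      rw [PsiQ_mk, Submodule.Quotient.mk_eq_zero]
      exact Psi_el_cycDer_mem K q S γ x v⟩

lemma Theta_mk (z : Quiv.PathAlg K q) :
    Theta K q S γ (Quiv.jmk K q S z) = PsiQ K q S γ z :=
  RingQuot.liftAlgHom_mkAlgHom_apply K _ _ z

end DA

end DualArrowAux

open Quiv in
/-- For a vertex `k` of a quiver with good potential, the map
`β* : P_i → ⊕_{j→k} P_j` constructed from `∂S/∂β = Σ_t λ_t α_{j_t} ṽ_t` (with `d ≥ 2` terms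
starting with pairwise distinct arrows into `k`) is irreducible: it does not factor as a
composition of a nontrivial map `P_i → P_r` (`r ≠ k`, given by an arrow `γ` of `Q`)
followed by a map `P_r → ⊕_{j→k} P_j`; such a factorization would force all terms of
`∂S/∂β` to share the length-two subpath `γβ`, contradicting goodness of `S`. -/
theorem dual_arrow_is_irreducible
    (K : Type) [Field K] (q : _root_.Quiv) [Fintype q.V] [Fintype q.E]
    [DecidableEq q.V] [DecidableEq q.E] (S : List q.E →₀ K)
    (hNoLoops : ∀ e : q.E, q.s e ≠ q.t e)
    (hNoTwoCycles : ∀ e f : q.E, ¬(q.s e = q.t f ∧ q.s f = q.t e))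
    (hGood : q.Good K S)
    (k : q.V) (β : q.E) (hβ : q.s β = k)
    -- the decomposition ∂S/∂β = Σ_t λ_t α_{j_t} ṽ_t with d ≥ 2 terms starting with
    -- pairwise distinct arrows into k
    (n : ℕ) (hn : 2 ≤ n) (lam : Fin n → K) (al : Fin n → q.In k) (vt : Fin n → List q.E)
    (hlam : ∀ t, lam t ≠ 0) (hal : Function.Injective al)
    (hdecomp : q.cycDer K β S = ∑ t, lam t • Finsupp.single ((al t).1 :: vt t) 1) :
    -- β* (given componentwise by the λ_t ṽ_t) does not factor through any arrow
    -- γ : i → r with r ≠ k: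
    ¬ ∃ (r : q.V) (_ : r ≠ k) (γ : q.E) (_ : q.s γ = q.t β ∧ q.t γ = r)
        (h : q.In k → Jacob K q S),
        ∀ e : q.In k,
          (∑ t, if al t = e then lam t • pathJ K q S (vt t) else 0)
            = h e * arrJ K q S γ := by
    classical
  rintro ⟨r, hrk, γ, ⟨hγ1, hγ2⟩, h, hfac⟩
  -- Each term of the decomposition lies in the support of ∂S/∂β.
  have hterm : ∀ t, ((al t).1 :: vt t) ∈ (q.cycDer K β S).support := by
    intro t
    rw [hdecomp, Finsupp.mem_support_iff, Finsupp.finset_sum_apply]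
    have hco : ∀ t' ∈ (Finset.univ : Finset (Fin n)),
        (lam t' • Finsupp.single ((al t').1 :: vt t') (1:K)) ((al t).1 :: vt t)
          = if t' = t then lam t' else 0 := by
      intro t' _
      rw [Finsupp.smul_apply, Finsupp.single_apply]
      by_cases ht : t' = t
      · subst ht
        rw [if_pos rfl, if_pos rfl, smul_eq_mul, mul_one]
      · have hne2 : ¬ ((al t').1 :: vt t' = (al t).1 :: vt t) := by
          intro hc
          injection hc with h1 _
          exact ht (hal (Subtype.ext h1))
        rw [if_neg ht, if_neg hne2, smul_zero]
    rw [Finset.sum_congr rfl hco, Finset.sum_ite_eq' Finset.univ t, if_pos (Finset.mem_univ t)]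
    exact hlam t
  have hdata := fun t => DA.mem_support_cycDer (hterm t)
  choose L hLmem kk hkk hkβ hterm_eq using hdata
  have hlen3 : ∀ t, 3 ≤ (L t).length := fun t =>
    DA.cyc_len hNoLoops hNoTwoCycles (hGood.1 _ (hLmem t))
  have hlen : ∀ t, (vt t).length = (L t).length - 2 := by
    intro t
    have h1 := congrArg List.length (hterm_eq t)
    rw [List.length_cons, DA.derTerm_length (hkk t)] at h1
    have h3 := hlen3 t
    omega
  -- If `vt t` ends with γ then the pair (γ, β) occurs at an explicit position
  have hγpair : ∀ t, (∃ m, vt t = m ++ [γ]) →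
      ∃ a, ∃ (ha : a < (L t).length),
        (q.cycPairs (L t))[a]'(by rw [DA.length_cycPairs]; exact ha) = (γ, β) ∧
        (a + 1) % (L t).length = kk t := by
    intro t ⟨m, hm⟩
    have hL3 := hlen3 t
    refine ⟨((L t).length - 2 + (kk t + 1)) % (L t).length, Nat.mod_lt _ (by omega), ?_, ?_⟩
    · have hconc : (L t).drop (kk t + 1) ++ (L t).take (kk t) = ((al t).1 :: m) ++ [γ] := by
        rw [← hterm_eq t, hm]
        rfl
      have hmlen : (L t).length - 2 = ((al t).1 :: m).length := by
        have h4 := congrArg List.length hm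
        rw [List.length_append, List.length_singleton] at h4
        rw [List.length_cons]
        have h5 := hlen t
        omega
      have hNlt : (L t).length - 2 < (L t).length - 1 := by omega
      have h1 : ((L t).drop (kk t + 1) ++ (L t).take (kk t))[(L t).length - 2]'(by
          rw [DA.derTerm_length (hkk t)]; omega) = γ := by
        rw [List.getElem_of_eq hconc]
        exact List.getElem_concat_length hmlen _
      have h2 := DA.derTerm_getElem (hkk t) (j := (L t).length - 2) hNlt
      have hidx : ((((L t).length - 2 + (kk t + 1)) % (L t).length) + 1) % (L t).length
          = kk t := by
        rw [DA.mod_succ_eq (by omega)]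
        have he : (L t).length - 2 + (kk t + 1) + 1 = kk t + (L t).length := by omega
        rw [he, Nat.add_mod_right, Nat.mod_eq_of_lt (hkk t)]
      rw [DA.cycPairs_getElem (L t) (Nat.mod_lt _ (by omega))]
      rw [DA.getElem_congr (L t) hidx]
      rw [show (L t)[((L t).length - 2 + (kk t + 1)) % (L t).length]'(Nat.mod_lt _ (by omega))
          = γ from h2.symm.trans h1]
      rw [show (L t)[kk t]'(hidx ▸ Nat.mod_lt _ (by omega)) = β from hkβ t]
    · have hidx : ((((L t).length - 2 + (kk t + 1)) % (L t).length) + 1) % (L t).length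
          = kk t := by
        rw [DA.mod_succ_eq (by omega)]
        have he : (L t).length - 2 + (kk t + 1) + 1 = kk t + (L t).length := by omega
        rw [he, Nat.add_mod_right, Nat.mod_eq_of_lt (hkk t)]
      exact hidx
  -- pick a term not ending with γ
  have hpick : ∃ t₀ : Fin n, ¬ ∃ m, vt t₀ = m ++ [γ] := by
    by_contra hall
    push_neg at hall
    have h01 : (0 : ℕ) < n := by omega
    have h11 : (1 : ℕ) < n := by omega
    set t1 : Fin n := ⟨0, h01⟩ with ht1d
    set t2 : Fin n := ⟨1, h11⟩ with ht2d
    have ht12 : t1 ≠ t2 := by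
      intro hh
      have := congrArg Fin.val hh
      simp [ht1d, ht2d] at this
    obtain ⟨a1, ha1, hP1, hk1⟩ := hγpair t1 (hall t1)
    obtain ⟨a2, ha2, hP2, hk2⟩ := hγpair t2 (hall t2)
    obtain ⟨hLL, haa⟩ := DA.good_occ_unique hGood (hLmem t1) (hLmem t2) ha1 ha2 hP1 hP2
    have hkk12 : kk t1 = kk t2 := by
      rw [← hk1, ← hk2, haa, hLL]
    have hterm12 : (al t1).1 :: vt t1 = (al t2).1 :: vt t2 := by
      rw [hterm_eq t1, hterm_eq t2, hLL, hkk12]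
    injection hterm12 with hh1 _
    exact ht12 (hal (Subtype.ext hh1))
  obtain ⟨t₀, ht₀⟩ := hpick
  have hn3 : 3 ≤ (L t₀).length := hlen3 t₀
  have hvlen : (vt t₀).length = (L t₀).length - 2 := hlen t₀
  have hcyc0 : q.IsCycle (L t₀) := hGood.1 _ (hLmem t₀)
  -- getElem description of vt t₀
  have hvget : ∀ j (hj : j < (vt t₀).length),
      (vt t₀)[j]'hj = (L t₀)[(j + 1 + (kk t₀ + 1)) % (L t₀).length]'(Nat.mod_lt _ (by omega)) := by
    intro j hj
    have h1 : (vt t₀)[j]'hj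
        = ((al t₀).1 :: vt t₀)[j+1]'(by rw [List.length_cons]; omega) :=
      (List.getElem_cons_succ _ _ j _).symm
    rw [h1, List.getElem_of_eq (hterm_eq t₀), DA.derTerm_getElem (hkk t₀) (by omega)]
  -- vt t₀ is a path with source t β
  have hvpath : q.IsPath (vt t₀) := by
    rw [DA.isPath_iff]
    intro j hj
    rw [hvget j (by omega), hvget (j+1) hj]
    refine DA.cyc_step' hcyc0 _ _ ?_
    rw [DA.mod_succ_eq (by omega)]
    congr 1
    omega
  have hvlast : ∀ hne : (vt t₀) ≠ [], q.s ((vt t₀).getLast hne) = q.t β := by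
    intro hne
    rw [List.getLast_eq_getElem, hvget ((vt t₀).length - 1) (by omega)]
    have hvpos : 0 < (vt t₀).length := List.length_pos_iff.mpr hne
    have hidx : ((((vt t₀).length - 1 + 1 + (kk t₀ + 1)) % (L t₀).length) + 1) % (L t₀).length
        = kk t₀ := by
      rw [DA.mod_succ_eq (by omega)]
      have he : (vt t₀).length - 1 + 1 + (kk t₀ + 1) + 1 = kk t₀ + (L t₀).length := by omega
      rw [he, Nat.add_mod_right, Nat.mod_eq_of_lt (hkk t₀)]
    have hstep := DA.cyc_step' hcyc0 (Nat.mod_lt _ (by omega)) (hkk t₀) hidx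
    rw [hstep, hkβ t₀]
  -- instantiate the factorization at e = al t₀
  have hfacL : lam t₀ • pathJ K q S (vt t₀) = h (al t₀) * arrJ K q S γ := by
    rw [← hfac (al t₀)]
    have hco : ∀ t ∈ (Finset.univ : Finset (Fin n)),
        (if al t = al t₀ then lam t • pathJ K q S (vt t) else 0)
          = if t = t₀ then lam t • pathJ K q S (vt t) else 0 := by
      intro t _
      by_cases ht : t = t₀
      · subst ht; rw [if_pos rfl, if_pos rfl]
      · rw [if_neg ht, if_neg (fun hh => ht (hal hh))]
    rw [Finset.sum_congr rfl hco, Finset.sum_ite_eq' Finset.univ t₀, if_pos (Finset.mem_univ _)]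
  -- apply the representation Theta and evaluate at the trivial path at t β
  have hL1 : DA.Theta K q S γ (lam t₀ • pathJ K q S (vt t₀))
      = lam t₀ • DA.PsiQ K q S γ (pathEl K q (vt t₀)) := by
    rw [map_smul, pathJ, DA.Theta_mk]
  have hR1 : DA.Theta K q S γ (h (al t₀) * arrJ K q S γ)
      = DA.Theta K q S γ (h (al t₀)) * DA.PsiQ K q S γ (arr K q γ) := by
    rw [map_mul, arrJ, DA.Theta_mk]
  have hkey : (lam t₀ • DA.PsiQ K q S γ (pathEl K q (vt t₀)))
        (Submodule.Quotient.mk (Finsupp.single (q.t β, ([] : List q.E)) (1:K)))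
      = (DA.Theta K q S γ (h (al t₀)) * DA.PsiQ K q S γ (arr K q γ))
        (Submodule.Quotient.mk (Finsupp.single (q.t β, ([] : List q.E)) (1:K))) := by
    rw [← hL1, ← hR1, hfacL]
  rw [LinearMap.smul_apply, DA.PsiQ_mk, Module.End.mul_apply, DA.PsiQ_mk] at hkey
  rw [DA.Psi_pathEl_pos K q (vt t₀) hvpath (q.t β) hvlast] at hkey
  have hEγ : DA.Psi K q (arr K q γ) (Finsupp.single (q.t β, ([] : List q.E)) (1:K))
      = Finsupp.single (q.t β, [γ]) 1 := by
    rw [DA.Psi_arr, DA.Earr_single, if_pos]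
    exact hγ1
  rw [hEγ] at hkey
  have hzero : (Submodule.Quotient.mk (Finsupp.single (q.t β, [γ]) (1:K))
      : DA.V0 K q ⧸ DA.Zsub K q S γ) = 0 := by
    rw [Submodule.Quotient.mk_eq_zero]
    exact DA.single_mem_Zsub K q S γ (Or.inl ⟨[], rfl⟩) 1
  rw [hzero, map_zero] at hkey
  have hmem : Finsupp.single (q.t β, vt t₀) (1:K) ∈ DA.Zsub K q S γ := by
    rw [← Submodule.Quotient.mk_eq_zero]
    rcases smul_eq_zero.mp hkey with hc | hc
    · exact absurd hc (hlam t₀)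
    · exact hc
  have hbad : DA.BadL K q S γ (vt t₀) := by
    have hsub := (Finsupp.mem_supported K _).mp hmem
    have h1 : ((q.t β, vt t₀) : q.V × List q.E)
        ∈ {b : q.V × List q.E | DA.BadL K q S γ b.2} := by
      apply hsub
      rw [Finsupp.support_single_ne_zero _ one_ne_zero]
      exact Finset.mem_singleton_self _
    exact h1
  -- combinatorial contradiction
  rcases hbad with hend | ⟨x, p, hp, m, w, hveq⟩
  · exact ht₀ hend
  · obtain ⟨l', hl'mem, k', hk', hk'x, hpeq⟩ := DA.mem_support_cycDer hp
    have hn' : 3 ≤ l'.length := DA.cyc_len hNoLoops hNoTwoCycles (hGood.1 _ hl'mem)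
    have hplen : p.length = l'.length - 1 := by
      rw [hpeq]; exact DA.derTerm_length hk'
    have hp0 : 0 < p.length := by omega
    have hp1 : 1 < p.length := by omega
    have hmem1 : (p[0]'hp0, p[1]'hp1) ∈ q.cycPairs l' := by
      have e0 := List.getElem_of_eq hpeq hp0
      have e1 := List.getElem_of_eq hpeq hp1
      rw [e0, e1]
      exact DA.derTerm_pair_mem hk' (by omega)
    have hmlen : m.length + 1 < (vt t₀).length := by
      have hle := congrArg List.length hveq
      rw [List.length_append, List.length_append] at hle
      omega
    have hv0 : (vt t₀)[m.length]'(by omega) = p[0]'hp0 := by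
      rw [List.getElem_of_eq hveq, List.getElem_append_right (le_refl m.length),
        DA.getElem_congr _ (Nat.sub_self m.length), List.getElem_append_left hp0]
    have hv1 : (vt t₀)[m.length + 1]'hmlen = p[1]'hp1 := by
      rw [List.getElem_of_eq hveq,
        List.getElem_append_right (by omega : m.length ≤ m.length + 1),
        DA.getElem_congr _ (by omega : m.length + 1 - m.length = 1),
        List.getElem_append_left hp1]
    have hmem2 : (p[0]'hp0, p[1]'hp1) ∈ q.cycPairs (L t₀) := by
      rw [← hv0, ← hv1]
      have h1 : (vt t₀)[m.length]'(by omega)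
          = ((al t₀).1 :: vt t₀)[m.length + 1]'(by rw [List.length_cons]; omega) :=
        (List.getElem_cons_succ _ _ _ _).symm
      have h2 : (vt t₀)[m.length + 1]'hmlen
          = ((al t₀).1 :: vt t₀)[m.length + 2]'(by rw [List.length_cons]; omega) :=
        (List.getElem_cons_succ _ _ _ _).symm
      rw [h1, h2, List.getElem_of_eq (hterm_eq t₀), List.getElem_of_eq (hterm_eq t₀)]
      exact DA.derTerm_pair_mem (hkk t₀) (by omega)
    have hll : l' = L t₀ := DA.good_pair_eq hGood hl'mem (hLmem t₀) hmem1 hmem2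
    have hle := congrArg List.length hveq
    rw [List.length_append, List.length_append] at hle
    rw [hll] at hplen
    omega
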